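/- For every n ∈ ℕ and every configuration D_n ∈ C_n, the following decomposition inequality holds: 6c_F n + V_n(D_n) ≥ Σ_{x ∈ D_n ∩ ∂L_{FS}} E_strip(x) + Σ_{x ∈ D_n \ S(∂L_{FS})} E_loc(x). -/

import Mathlib

open scoped BigOperators Classical Topology ENNReal
open Filter MeasureTheory

noncomputable section

/-!
Common setting: film lattice `L_F` with parameter `e_F = 1`, substrate spacing
`e_S = q/p` (`p, q` coprime positive integers), Heitmann–Radin potentials and the
configurational energy `V_n` (with values in `EReal`, since the Heitmann–Radin
potential takes the value `+∞` below distance `1`).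
-/

/-- Points of the plane. -/
abbrev Pt : Type := ℝ × ℝ

/-- The lattice vector `t₁ = (1,0)`. -/
def t1 : Pt := ((1 : ℝ), (0 : ℝ))

/-- The lattice vector `t₂ = (1/2, √3/2)`. -/
def t2 : Pt := ((1 / 2 : ℝ), Real.sqrt 3 / 2)

/-- Euclidean distance on `ℝ × ℝ`. -/
def dE (x y : Pt) : ℝ := Real.sqrt ((x.1 - y.1) ^ 2 + (x.2 - y.2) ^ 2)

/-- Substrate lattice spacing `e_S = q / p`. -/
def eS (p q : ℕ) : ℝ := (q : ℝ) / (p : ℝ)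

/-- The film lattice `L_F = {(0, e_S) + k₁ t₁ + k₂ t₂ : k₁ ∈ ℤ, k₂ ∈ ℕ ∪ {0}}`. -/
def LF (p q : ℕ) : Set Pt :=
  {x | ∃ (k₁ : ℤ) (k₂ : ℕ), x = (((0 : ℝ), eS p q) : Pt) + (k₁ : ℝ) • t1 + (k₂ : ℝ) • t2}

/-- The set `∂L_{FS} = {(k q, e_S) : k ∈ ℤ}` of lower-boundary film sites lying at
distance `e_S` above a substrate atom. -/
def bLFS (p q : ℕ) : Set Pt := {x | ∃ k : ℤ, x = (((k : ℝ) * (q : ℝ), eS p q) : Pt)}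

/-- Crystalline configurations with `n` atoms: subsets of `L_F` of cardinality `n`. -/
def Cn (p q n : ℕ) : Set (Finset Pt) := {D | ↑D ⊆ LF p q ∧ D.card = n}

/-- The Heitmann–Radin sticky-disc potential: `+∞` for `r < 1`, `-c_F` at `r = 1`,
`0` for `r > 1`. -/
def vF (cF : ℝ) (r : ℝ) : EReal :=
  if r < 1 then (⊤ : EReal) else if r = 1 then ((-cF : ℝ) : EReal) else (0 : EReal)

/-- The one-body substrate potential `v¹`: `-c_S` on `∂L_{FS}`, `0` otherwise. -/
def v1 (cS : ℝ) (p q : ℕ) (x : Pt) : ℝ := if x ∈ bLFS p q then -cS else 0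

/-- The total energy `V_n(D) = Σ_{(x,y) ∈ D×D, x ≠ y} v_F(|x-y|) + Σ_{x ∈ D} v¹(x)`. -/
def Vn (cF cS : ℝ) (p q : ℕ) (D : Finset Pt) : EReal :=
  (∑ e ∈ D.offDiag, vF cF (dE e.1 e.2)) + (((∑ x ∈ D, v1 cS p q x) : ℝ) : EReal)

/-- The dewetting condition: `c_S < 4c_F` if `q = 1` and `c_S < 6c_F` if `q ≠ 1`. -/
def Dewetting (cF cS : ℝ) (q : ℕ) : Prop := if q = 1 then cS < 4 * cF else cS < 6 * cF

/-- The boundary `∂D` of a configuration: atoms with fewer than `6` film neighbours. -/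
def bdry (D : Finset Pt) : Finset Pt :=
  D.filter fun x => (D.filter fun y => dE x y = 1).card < 6

/-- The empirical measure `μ_{D_n} = (1/n) Σ_{x ∈ D_n} δ_{x/√n}`. -/
def emp (n : ℕ) (D : Finset Pt) : Measure Pt :=
  ((n : ℝ≥0∞))⁻¹ • ∑ x ∈ D, Measure.dirac (((Real.sqrt n)⁻¹ : ℝ) • x)

/-- A configuration of `n` consecutive sites `{w, w + t₁, …, w + (n-1) t₁}` on `∂L_{FS}`. -/
def IsConsecutive (p q n : ℕ) (Dw : Finset Pt) : Prop :=
  ∃ w : Pt, w ∈ bLFS p q ∧ Dw = (Finset.range n).image fun i => w + (i : ℝ) • t1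

/-- Two atoms joined by a chain of atoms of `D` with consecutive distances `1`. -/
def chainConn (D : Finset Pt) (x y : Pt) : Prop :=
  Relation.ReflTransGen (fun a b => a ∈ D ∧ b ∈ D ∧ dE a b = 1) x y

/-- Connectedness of a configuration. -/
def IsConnectedConf (D : Finset Pt) : Prop := ∀ x ∈ D, ∀ y ∈ D, chainConn D x y

/-- `C` is a connected component of `D` (the set of atoms of `D` chain-connected to
some atom of `D`). -/
def IsComponent (D C : Finset Pt) : Prop :=
  ∃ x ∈ D, ∀ y : Pt, y ∈ C ↔ y ∈ D ∧ chainConn D x y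

/-- Almost-connectedness: connected if `q = 1`; if `q ≠ 1`, the connected components
can be enumerated so that each one is at distance at most `q` from the union of the
previous ones. -/
def AlmostConnected (q : ℕ) (D : Finset Pt) : Prop :=
  if q = 1 then IsConnectedConf D
  else
    ∃ (k : ℕ) (f : Fin k → Finset Pt),
      Function.Injective f ∧
      (∀ i, IsComponent D (f i)) ∧
      (∀ C : Finset Pt, IsComponent D C → ∃ i, C = f i) ∧
      (∀ i : Fin k, 1 ≤ (i : ℕ) →
        ∃ x ∈ f i, ∃ j : Fin k, j < i ∧ ∃ y ∈ f j, dE x y ≤ (q : ℝ))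

/-- Local energy `E_loc(x)` of a site with respect to the configuration `D`. -/
def Eloc (cF : ℝ) (D : Finset Pt) (x : Pt) : ℝ :=
  if x ∈ D then cF * (6 - ((D.filter fun y => dE x y = 1).card : ℝ)) else 0

/-- Height `y_M` of the topmost atom of `D` in the column of `x`. -/
def yM (D : Finset Pt) (x : Pt) : ℝ := sSup {y : ℝ | ((x.1, y) : Pt) ∈ D}

/-- The strip top `x̃ = (x¹, y_M)`. -/
def til (D : Finset Pt) (x : Pt) : Pt := (x.1, yM D x)

/-- The weight `w₊(x̃)`. -/
def wPlus (p q : ℕ) (D : Finset Pt) (x : Pt) : ℝ :=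
  if x + t1 ∈ D ∧ x + t1 ∈ bLFS p q ∧ til D x + t2 = til D (x + t1) + t2 - t1 then 1 / 2 else 1

/-- The weight `w₋(x̃)`. -/
def wMinus (p q : ℕ) (D : Finset Pt) (x : Pt) : ℝ :=
  if x - t1 ∈ D ∧ x - t1 ∈ bLFS p q ∧ til D x + t2 - t1 = til D (x - t1) + t2 then 1 / 2 else 1

/-- Lower strip energy `E_strip,below(x)`. -/
def EStripBelow (cF cS : ℝ) (p q : ℕ) (D : Finset Pt) (x : Pt) : ℝ :=
  if q = 1 then
    (1 / 2) * Eloc cF D x + (1 / 4) * Eloc cF D (x + t1) + (1 / 4) * Eloc cF D (x - t1) - cS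
  else
    Eloc cF D x + (1 / 2) * Eloc cF D (x + t1) + (1 / 2) * Eloc cF D (x - t1) - cS

/-- Upper strip energy `E_strip,above(x)`. -/
def EStripAbove (cF : ℝ) (p q : ℕ) (D : Finset Pt) (x : Pt) : ℝ :=
  (if til D x ≠ x then Eloc cF D (til D x) else 0) +
    wPlus p q D x * Eloc cF D (til D x + t2) +
    wMinus p q D x * Eloc cF D (til D x + t2 - t1)

/-- The strip energy `E_strip(x) = E_strip,below(x) + E_strip,above(x)`. -/
def EStrip (cF cS : ℝ) (p q : ℕ) (D : Finset Pt) (x : Pt) : ℝ :=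
  EStripBelow cF cS p q D x + EStripAbove cF p q D x

/-- `Δ_strip`: `4c_F - c_S` if `q = 1`, `6c_F - c_S` if `q ≠ 1`. -/
def DeltaStrip (cF cS : ℝ) (q : ℕ) : ℝ := if q = 1 then 4 * cF - cS else 6 * cF - cS

/-- The union `S(∂L_{FS})` of all strips of the configuration `D`. -/
def SLFS (p q : ℕ) (D : Finset Pt) : Finset Pt :=
  D.filter fun y => ∃ x, x ∈ D ∧ x ∈ bLFS p q ∧
    (y = x ∨ y = x + t1 ∨ y = x - t1 ∨ y = til D x ∨ y = til D x + t2 ∨ y = til D x + t2 - t1)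

/-- The rescaled energy `E_n(μ_{D_n}) = n^{-1/2} (V_n(D_n) + 6 c_F n)`. -/
def En (cF cS : ℝ) (p q n : ℕ) (D : Finset Pt) : EReal :=
  ((((Real.sqrt n)⁻¹ : ℝ)) : EReal) * (Vn cF cS p q D + ((6 * cF * (n : ℝ) : ℝ) : EReal))

lemma bLFS_snd {p q : ℕ} {x : Pt} (hx : x ∈ bLFS p q) : x.2 = eS p q := by
  obtain ⟨k, hk⟩ := hx; rw [hk]

lemma bLFS_fst {p q : ℕ} {x : Pt} (hx : x ∈ bLFS p q) : ∃ k : ℤ, x.1 = (k : ℝ) * q := by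
  obtain ⟨k, hk⟩ := hx; exact ⟨k, by rw [hk]⟩

lemma bLFS_eq {p q : ℕ} {x : Pt} (hx : x ∈ bLFS p q) : x = (x.1, eS p q) := by
  obtain ⟨k, hk⟩ := hx; rw [hk]

lemma LF_param {p q : ℕ} {x : Pt} (hx : x ∈ LF p q) :
    ∃ (k₁ : ℤ) (k₂ : ℕ), x.1 = (k₁ : ℝ) + (k₂ : ℝ) / 2 ∧
      x.2 = eS p q + (k₂ : ℝ) * (Real.sqrt 3 / 2) := by
  obtain ⟨k₁, k₂, hk⟩ := hx
  refine ⟨k₁, k₂, ?_, ?_⟩ <;> rw [hk] <;>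
    simp [t1, t2, Prod.fst_add, Prod.snd_add, Prod.smul_fst, Prod.smul_snd, smul_eq_mul] <;> ring

lemma int_sol {a b : ℤ} (h : a^2 + a*b + b^2 = 1) :
    (a = 1 ∧ b = 0) ∨ (a = -1 ∧ b = 0) ∨ (a = 0 ∧ b = 1) ∨ (a = 0 ∧ b = -1) ∨
    (a = 1 ∧ b = -1) ∨ (a = -1 ∧ b = 1) := by
  have hb1 : -1 ≤ b := by nlinarith [sq_nonneg (2*a+b), sq_nonneg (b+1)]
  have hb2 : b ≤ 1 := by nlinarith [sq_nonneg (2*a+b), sq_nonneg (b-1)]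
  have ha1 : -1 ≤ a := by nlinarith [sq_nonneg (a+2*b), sq_nonneg (a+1)]
  have ha2 : a ≤ 1 := by nlinarith [sq_nonneg (a+2*b), sq_nonneg (a-1)]
  interval_cases a <;> interval_cases b <;> omega

lemma dE_self (x : Pt) : dE x x = 0 := by simp [dE]

lemma neighbor_cases {p q : ℕ} {x z : Pt} (hx : x ∈ LF p q) (hz : z ∈ LF p q)
    (h : dE x z = 1) :
    z = x + t1 ∨ z = x - t1 ∨ z = x + t2 ∨ z = x - t2 ∨ z = x + t2 - t1 ∨ z = x + t1 - t2 := by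
  obtain ⟨k₁, k₂, hx1, hx2⟩ := LF_param hx
  obtain ⟨m₁, m₂, hz1, hz2⟩ := LF_param hz
  obtain ⟨a, ha⟩ : ∃ a : ℤ, a = m₁ - k₁ := ⟨_, rfl⟩
  obtain ⟨b, hb⟩ : ∃ b : ℤ, b = (m₂ : ℤ) - (k₂ : ℤ) := ⟨_, rfl⟩
  have hd1 : z.1 - x.1 = (a : ℝ) + (b : ℝ)/2 := by rw [hx1, hz1, ha, hb]; push_cast; ring
  have hd2 : z.2 - x.2 = (b : ℝ) * (Real.sqrt 3 / 2) := by rw [hx2, hz2, hb]; push_cast; ring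
  have hsq : (x.1 - z.1)^2 + (x.2 - z.2)^2 = 1 := by
    have h0 : 0 ≤ (x.1 - z.1)^2 + (x.2 - z.2)^2 := by positivity
    have := h; unfold dE at this
    nlinarith [Real.sq_sqrt h0, this]
  have h3 : Real.sqrt 3 ^ 2 = 3 := Real.sq_sqrt (by norm_num)
  have hR : ((a:ℝ))^2 + (a:ℝ)*(b:ℝ) + (b:ℝ)^2 = 1 := by
    have e1 : (x.1 - z.1)^2 = ((a:ℝ) + (b:ℝ)/2)^2 := by
      rw [show x.1 - z.1 = -(z.1 - x.1) by ring, hd1]; ring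
    have e2 : (x.2 - z.2)^2 = ((b:ℝ))^2 * 3 / 4 := by
      rw [show x.2 - z.2 = -(z.2 - x.2) by ring, hd2]
      rw [show ((-((b:ℝ) * (Real.sqrt 3 / 2)))^2) = (b:ℝ)^2 * (Real.sqrt 3 ^2) / 4 by ring, h3]
    nlinarith [hsq, e1, e2]
  have hZ : a^2 + a*b + b^2 = 1 := by exact_mod_cast hR
  rcases int_sol hZ with ⟨h1,h2⟩|⟨h1,h2⟩|⟨h1,h2⟩|⟨h1,h2⟩|⟨h1,h2⟩|⟨h1,h2⟩ <;>
      (rw [h1] at hd1; rw [h2] at hd1 hd2; push_cast at hd1 hd2)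
  · exact Or.inl (Prod.ext_iff.mpr ⟨by simp [t1]; linarith, by simp [t1]; linarith⟩)
  · exact Or.inr (Or.inl (Prod.ext_iff.mpr ⟨by simp [t1]; linarith, by simp [t1]; linarith⟩))
  · exact Or.inr (Or.inr (Or.inl (Prod.ext_iff.mpr
      ⟨by simp [t2]; linarith, by simp [t2]; linarith⟩)))
  · exact Or.inr (Or.inr (Or.inr (Or.inl (Prod.ext_iff.mpr
      ⟨by simp [t2]; linarith, by simp [t2]; linarith⟩))))
  · exact Or.inr (Or.inr (Or.inr (Or.inr (Or.inr (Prod.ext_iff.mpr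
      ⟨by simp [t1, t2]; linarith, by simp [t1, t2]; linarith⟩)))))
  · exact Or.inr (Or.inr (Or.inr (Or.inr (Or.inl (Prod.ext_iff.mpr
      ⟨by simp [t1, t2]; linarith, by simp [t1, t2]; linarith⟩)))))

lemma card_six {α : Type*} [DecidableEq α] (a b c d e f : α) :
    ({a, b, c, d, e, f} : Finset α).card ≤ 6 := by
  refine (Finset.card_insert_le _ _).trans (Nat.add_le_add_right ?_ 1)
  refine (Finset.card_insert_le _ _).trans (Nat.add_le_add_right ?_ 1)
  refine (Finset.card_insert_le _ _).trans (Nat.add_le_add_right ?_ 1)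
  refine (Finset.card_insert_le _ _).trans (Nat.add_le_add_right ?_ 1)
  refine (Finset.card_insert_le _ _).trans (Nat.add_le_add_right ?_ 1)
  simp

lemma card_nbrs_le {p q : ℕ} {D : Finset Pt} (hD : ↑D ⊆ LF p q) {x : Pt} (hx : x ∈ LF p q) :
    (D.filter fun y => dE x y = 1).card ≤ 6 := by
  have hsub : (D.filter fun y => dE x y = 1) ⊆
      ({x + t1, x - t1, x + t2, x - t2, x + t2 - t1, x + t1 - t2} : Finset Pt) := by
    intro z hz
    rw [Finset.mem_filter] at hz
    have := neighbor_cases hx (hD hz.1) hz.2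
    simp only [Finset.mem_insert, Finset.mem_singleton]
    tauto
  exact (Finset.card_le_card hsub).trans (card_six _ _ _ _ _ _)

lemma Eloc_nonneg {cF : ℝ} (hcF : 0 ≤ cF) {p q : ℕ} {D : Finset Pt} (hD : ↑D ⊆ LF p q)
    (x : Pt) : 0 ≤ Eloc cF D x := by
  unfold Eloc
  split
  · rename_i hxD
    have h6 := card_nbrs_le hD (hD hxD)
    have : ((D.filter fun y => dE x y = 1).card : ℝ) ≤ 6 := by exact_mod_cast h6
    have : (0:ℝ) ≤ 6 - ((D.filter fun y => dE x y = 1).card : ℝ) := by linarith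
    exact mul_nonneg hcF this
  · exact le_refl 0

lemma col_set_eq (D : Finset Pt) (x : Pt) :
    {y : ℝ | ((x.1, y) : Pt) ∈ D} = ↑((D.filter fun z => z.1 = x.1).image Prod.snd) := by
  ext y
  simp only [Set.mem_setOf_eq, Finset.coe_image, Set.mem_image, Finset.mem_coe,
    Finset.mem_filter]
  constructor
  · intro h; exact ⟨(x.1, y), ⟨h, rfl⟩, rfl⟩
  · rintro ⟨z, ⟨hz, h1⟩, h2⟩
    have : z = (x.1, y) := Prod.ext_iff.mpr ⟨h1, h2⟩
    rwa [this] at hz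

lemma til_mem {D : Finset Pt} {x : Pt} (hx : x ∈ D) : til D x ∈ D := by
  have hfin : ({y : ℝ | ((x.1, y) : Pt) ∈ D}).Finite := by
    rw [col_set_eq]; exact (Finset.finite_toSet _)
  have hne : {y : ℝ | ((x.1, y) : Pt) ∈ D}.Nonempty := ⟨x.2, by simpa using hx⟩
  exact hne.csSup_mem hfin

lemma yM_ge {D : Finset Pt} {x : Pt} (hx : x ∈ D) : x.2 ≤ yM D x := by
  have hfin : ({y : ℝ | ((x.1, y) : Pt) ∈ D}).Finite := by
    rw [col_set_eq]; exact (Finset.finite_toSet _)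
  exact le_csSup hfin.bddAbove (by simpa using hx)

lemma not_q_half (q : ℕ) {k k' : ℤ} (h : (k : ℝ) * q = (k' : ℝ) * q + 1/2) : False := by
  have h2 : ((2 * ((k - k') * q) : ℤ) : ℝ) = 1 := by push_cast; linarith
  have h3 : (2 * ((k - k') * q) : ℤ) = 1 := by exact_mod_cast h2
  omega

lemma q_eq_one (q : ℕ) {k k' : ℤ} (h : (k : ℝ) * q = (k' : ℝ) * q + 1) : q = 1 := by
  have h2 : (((k - k') * q : ℤ) : ℝ) = 1 := by push_cast; linarith
  have h3 : ((k - k') * q : ℤ) = 1 := by exact_mod_cast h2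
  have hdvd : (q : ℤ) ∣ 1 := ⟨k - k', by linarith [h3, mul_comm (k - k') (q : ℤ)]⟩
  have : q ∣ 1 := by exact_mod_cast hdvd
  exact Nat.dvd_one.mp this

lemma wPlus_le_one (p q : ℕ) (D : Finset Pt) (x : Pt) : wPlus p q D x ≤ 1 := by
  unfold wPlus; split <;> norm_num

lemma wPlus_nonneg (p q : ℕ) (D : Finset Pt) (x : Pt) : 0 ≤ wPlus p q D x := by
  unfold wPlus; split <;> norm_num

lemma wMinus_le_one (p q : ℕ) (D : Finset Pt) (x : Pt) : wMinus p q D x ≤ 1 := by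
  unfold wMinus; split <;> norm_num

lemma wMinus_nonneg (p q : ℕ) (D : Finset Pt) (x : Pt) : 0 ≤ wMinus p q D x := by
  unfold wMinus; split <;> norm_num

lemma sqrt3_pos : (0:ℝ) < Real.sqrt 3 / 2 := by positivity

def ca (q : ℕ) : ℝ := if q = 1 then 1/2 else 1

def cb (q : ℕ) : ℝ := if q = 1 then 1/4 else 1/2

def coef (p q : ℕ) (D : Finset Pt) (x y : Pt) : ℝ :=
  (if y = x then ca q else 0) + (if y = x + t1 then cb q else 0) +
  (if y = x - t1 then cb q else 0) +
  (if til D x ≠ x ∧ y = til D x then 1 else 0) +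
  (if y = til D x + t2 then wPlus p q D x else 0) +
  (if y = til D x + t2 - t1 then wMinus p q D x else 0)

lemma sum_ite_mul (T : Finset Pt) (z : Pt) (c : ℝ) (g : Pt → ℝ) :
    ∑ y ∈ T, (if y = z then c else 0) * g y = if z ∈ T then c * g z else 0 := by
  rw [Finset.sum_congr rfl (fun y _ => show (if y = z then c else 0) * g y
      = if y = z then c * g y else 0 by split <;> simp)]
  exact Finset.sum_ite_eq' T z (fun y => c * g y)

lemma stripA (cF cS : ℝ) (p q : ℕ) (D : Finset Pt) {x : Pt}
    (hxD : x ∈ D) (hxF : x ∈ bLFS p q) :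
    ∑ y ∈ SLFS p q D, coef p q D x y * Eloc cF D y = EStrip cF cS p q D x + cS := by
  have hmem : ∀ z : Pt,
      (z = x ∨ z = x + t1 ∨ z = x - t1 ∨ z = til D x ∨ z = til D x + t2 ∨
        z = til D x + t2 - t1) → (z ∈ SLFS p q D ↔ z ∈ D) := by
    intro z hz
    constructor
    · exact fun h => (Finset.mem_filter.mp h).1
    · exact fun h => Finset.mem_filter.mpr ⟨h, ⟨x, hxD, hxF, hz⟩⟩
  have key : ∀ (z : Pt) (c : ℝ),
      (z = x ∨ z = x + t1 ∨ z = x - t1 ∨ z = til D x ∨ z = til D x + t2 ∨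
        z = til D x + t2 - t1) →
      ∑ y ∈ SLFS p q D, (if y = z then c else 0) * Eloc cF D y = c * Eloc cF D z := by
    intro z c hz
    rw [sum_ite_mul]
    split
    · rfl
    · rename_i hzn
      have hznD : z ∉ D := fun h => hzn ((hmem z hz).mpr h)
      simp [Eloc, hznD]
  by_cases hA : til D x ≠ x
  · have expand : ∀ y ∈ SLFS p q D, coef p q D x y * Eloc cF D y =
        (if y = x then ca q else 0) * Eloc cF D y +
        ((if y = x + t1 then cb q else 0) * Eloc cF D y +
        ((if y = x - t1 then cb q else 0) * Eloc cF D y +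
        ((if y = til D x then (1:ℝ) else 0) * Eloc cF D y +
        ((if y = til D x + t2 then wPlus p q D x else 0) * Eloc cF D y +
        (if y = til D x + t2 - t1 then wMinus p q D x else 0) * Eloc cF D y)))) := by
      intro y _
      unfold coef
      simp only [eq_true hA, true_and]
      ring
    rw [Finset.sum_congr rfl expand]
    rw [Finset.sum_add_distrib, Finset.sum_add_distrib, Finset.sum_add_distrib,
      Finset.sum_add_distrib, Finset.sum_add_distrib]
    rw [key x _ (Or.inl rfl), key _ _ (Or.inr (Or.inl rfl)),
      key _ _ (Or.inr (Or.inr (Or.inl rfl))),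
      key _ _ (Or.inr (Or.inr (Or.inr (Or.inl rfl)))),
      key _ _ (Or.inr (Or.inr (Or.inr (Or.inr (Or.inl rfl))))),
      key _ _ (Or.inr (Or.inr (Or.inr (Or.inr (Or.inr rfl)))))]
    unfold EStrip EStripBelow EStripAbove ca cb
    rw [if_pos hA]
    by_cases hq1 : q = 1
    · simp only [if_pos hq1]; ring
    · simp only [if_neg hq1]; ring
  · rw [not_ne_iff] at hA
    have expand : ∀ y ∈ SLFS p q D, coef p q D x y * Eloc cF D y =
        (if y = x then ca q else 0) * Eloc cF D y +
        ((if y = x + t1 then cb q else 0) * Eloc cF D y +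
        ((if y = x - t1 then cb q else 0) * Eloc cF D y +
        ((if y = til D x + t2 then wPlus p q D x else 0) * Eloc cF D y +
        (if y = til D x + t2 - t1 then wMinus p q D x else 0) * Eloc cF D y))) := by
      intro y _
      unfold coef
      simp only [hA, ne_eq, not_true_eq_false, false_and, if_false]
      ring
    rw [Finset.sum_congr rfl expand]
    rw [Finset.sum_add_distrib, Finset.sum_add_distrib, Finset.sum_add_distrib,
      Finset.sum_add_distrib]
    rw [key x _ (Or.inl rfl), key _ _ (Or.inr (Or.inl rfl)),
      key _ _ (Or.inr (Or.inr (Or.inl rfl))),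
      key _ _ (Or.inr (Or.inr (Or.inr (Or.inr (Or.inl rfl))))),
      key _ _ (Or.inr (Or.inr (Or.inr (Or.inr (Or.inr rfl)))))]
    unfold EStrip EStripBelow EStripAbove ca cb
    rw [hA]
    simp only [ne_eq, not_true_eq_false, if_false, ite_false]
    by_cases hq1 : q = 1
    · simp only [if_pos hq1]; ring
    · simp only [if_neg hq1]; ring

lemma sum_single {F : Finset Pt} {g : Pt → ℝ} {x₀ : Pt}
    (h : ∀ x ∈ F, g x ≠ 0 → x = x₀) : ∑ x ∈ F, g x = if x₀ ∈ F then g x₀ else 0 := by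
  split_ifs with h0
  · refine Finset.sum_eq_single_of_mem x₀ h0 (fun b hb hne => ?_)
    by_contra hgb; exact hne (h b hb hgb)
  · refine Finset.sum_eq_zero (fun b hb => ?_)
    by_contra hgb; exact h0 ((h b hb hgb) ▸ hb)

lemma det_ite {P : Prop} [Decidable P] {c : ℝ} (h : (if P then c else 0) ≠ 0) : P := by
  by_contra hP; simp [hP] at h

lemma stripB {p q : ℕ} {D : Finset Pt} (y : Pt) :
    ∑ x ∈ D.filter (fun x => x ∈ bLFS p q), coef p q D x y ≤ 1 := by
  classical
  set F := D.filter (fun x => x ∈ bLFS p q) with hFdef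
  have hFmem : ∀ z : Pt, z ∈ F → z ∈ D ∧ z ∈ bLFS p q := fun z hz => Finset.mem_filter.mp hz
  set xc : Pt := ((y.1, eS p q) : Pt) with hxc
  set xR : Pt := ((y.1 - 1/2, eS p q) : Pt) with hxR
  set xL : Pt := ((y.1 + 1/2, eS p q) : Pt) with hxL
  have hsplit : ∑ x ∈ F, coef p q D x y =
      (∑ x ∈ F, if y = x then ca q else 0) +
      (∑ x ∈ F, if y = x + t1 then cb q else 0) +
      (∑ x ∈ F, if y = x - t1 then cb q else 0) +
      (∑ x ∈ F, if til D x ≠ x ∧ y = til D x then 1 else 0) +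
      (∑ x ∈ F, if y = til D x + t2 then wPlus p q D x else 0) +
      (∑ x ∈ F, if y = til D x + t2 - t1 then wMinus p q D x else 0) := by
    simp only [coef, Finset.sum_add_distrib]
  have hS0 : (∑ x ∈ F, if y = x then ca q else 0) = if y ∈ F then ca q else 0 := by
    rw [sum_single (x₀ := y) (fun x hx hne => (det_ite hne).symm)]
    simp
  have hS1 : (∑ x ∈ F, if y = x + t1 then cb q else 0) = if y - t1 ∈ F then cb q else 0 := by
    rw [sum_single (x₀ := y - t1) (fun x hx hne => eq_sub_of_add_eq (det_ite hne).symm)]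
    simp
  have hS2 : (∑ x ∈ F, if y = x - t1 then cb q else 0) = if y + t1 ∈ F then cb q else 0 := by
    rw [sum_single (x₀ := y + t1) (fun x hx hne => eq_add_of_sub_eq (det_ite hne).symm)]
    simp
  have hS3 : (∑ x ∈ F, if til D x ≠ x ∧ y = til D x then 1 else 0) =
      if xc ∈ F then (if til D xc ≠ xc ∧ y = til D xc then (1:ℝ) else 0) else 0 := by
    refine sum_single (fun x hx hne => ?_)
    have hc := det_ite hne
    have hxb : x = (x.1, eS p q) := bLFS_eq (hFmem x hx).2
    have h1 : y.1 = x.1 := by rw [hc.2]; rfl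
    rw [hxc, h1]; exact hxb
  have hS4 : (∑ x ∈ F, if y = til D x + t2 then wPlus p q D x else 0) =
      if xR ∈ F then (if y = til D xR + t2 then wPlus p q D xR else 0) else 0 := by
    refine sum_single (fun x hx hne => ?_)
    have hc := det_ite hne
    have hxb : x = (x.1, eS p q) := bLFS_eq (hFmem x hx).2
    have h1 : y.1 = x.1 + 1/2 := by rw [hc]; simp [til, t2]
    have h1' : x.1 = y.1 - 1/2 := by linarith
    rw [hxR, ← h1']; exact hxb
  have hS5 : (∑ x ∈ F, if y = til D x + t2 - t1 then wMinus p q D x else 0) =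
      if xL ∈ F then (if y = til D xL + t2 - t1 then wMinus p q D xL else 0) else 0 := by
    refine sum_single (fun x hx hne => ?_)
    have hc := det_ite hne
    have hxb : x = (x.1, eS p q) := bLFS_eq (hFmem x hx).2
    have h1 : y.1 = x.1 - 1/2 := by rw [hc]; simp [til, t2, t1]; ring
    have h1' : x.1 = y.1 + 1/2 := by linarith
    rw [hxL, ← h1']; exact hxb
  rw [hsplit, hS0, hS1, hS2, hS3, hS4, hS5]
  -- basic height facts
  have habove4 : (xR ∈ F ∧ y = til D xR + t2) → eS p q < y.2 := by
    rintro ⟨hm, hc⟩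
    have h2 : y.2 = yM D xR + Real.sqrt 3 / 2 := by rw [hc]; simp [til, t2]
    have := yM_ge (hFmem xR hm).1
    have hx2 : xR.2 = eS p q := rfl
    rw [hx2] at this
    linarith [sqrt3_pos]
  have habove5 : (xL ∈ F ∧ y = til D xL + t2 - t1) → eS p q < y.2 := by
    rintro ⟨hm, hc⟩
    have h2 : y.2 = yM D xL + Real.sqrt 3 / 2 := by rw [hc]; simp [til, t2, t1]
    have := yM_ge (hFmem xL hm).1
    have hx2 : xL.2 = eS p q := rfl
    rw [hx2] at this
    linarith [sqrt3_pos]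
  have hbel0 : y ∈ F → y.2 = eS p q := fun h => bLFS_snd (hFmem y h).2
  have hbel1 : y - t1 ∈ F → y.2 = eS p q := fun h => by
    have := bLFS_snd (hFmem _ h).2
    simpa [t1] using this
  have hbel2 : y + t1 ∈ F → y.2 = eS p q := fun h => by
    have := bLFS_snd (hFmem _ h).2
    simpa [t1] using this
  have hQ3ne : (xc ∈ F ∧ (til D xc ≠ xc ∧ y = til D xc)) → y.2 ≠ eS p q := by
    rintro ⟨hm, hne, hc⟩ h2
    have hy1 : y.1 = xc.1 := rfl
    have : y = xc := Prod.ext_iff.mpr ⟨hy1, h2⟩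
    exact hne (hc ▸ this)
  -- column facts
  have hQ3col : xc ∈ F → ∃ k : ℤ, y.1 = (k : ℝ) * q := by
    intro hm; obtain ⟨k, hk⟩ := bLFS_fst (hFmem xc hm).2; exact ⟨k, hk⟩
  have hQ4col : xR ∈ F → ∃ k : ℤ, y.1 - 1/2 = (k : ℝ) * q := by
    intro hm; obtain ⟨k, hk⟩ := bLFS_fst (hFmem xR hm).2; exact ⟨k, hk⟩
  have hQ5col : xL ∈ F → ∃ k : ℤ, y.1 + 1/2 = (k : ℝ) * q := by
    intro hm; obtain ⟨k, hk⟩ := bLFS_fst (hFmem xL hm).2; exact ⟨k, hk⟩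
  have notQ3Q4 : ¬(xc ∈ F ∧ xR ∈ F) := by
    rintro ⟨h3, h4⟩
    obtain ⟨k, hk⟩ := hQ3col h3; obtain ⟨k', hk'⟩ := hQ4col h4
    exact not_q_half q (k := k) (k' := k') (by linarith)
  have notQ3Q5 : ¬(xc ∈ F ∧ xL ∈ F) := by
    rintro ⟨h3, h5⟩
    obtain ⟨k, hk⟩ := hQ3col h3; obtain ⟨k', hk'⟩ := hQ5col h5
    exact not_q_half q (k := k') (k' := k) (by linarith)
  have hRL : xR + t1 = xL := by
    refine Prod.ext_iff.mpr ⟨?_, ?_⟩ <;> simp [t1, hxR, hxL] <;> ring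
  have hLR : xL - t1 = xR := by rw [← hRL]; abel
  by_cases h4 : xR ∈ F ∧ y = til D xR + t2
  · have hy2 := habove4 h4
    have e0 : (if y ∈ F then ca q else 0) = 0 := by
      rw [if_neg (fun h => absurd (hbel0 h) (ne_of_gt hy2))]
    have e1 : (if y - t1 ∈ F then cb q else 0) = 0 := by
      rw [if_neg (fun h => absurd (hbel1 h) (ne_of_gt hy2))]
    have e2 : (if y + t1 ∈ F then cb q else 0) = 0 := by
      rw [if_neg (fun h => absurd (hbel2 h) (ne_of_gt hy2))]
    have e3 : (if xc ∈ F then (if til D xc ≠ xc ∧ y = til D xc then (1:ℝ) else 0) else 0) = 0 := by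
      split_ifs with hm hc
      · exact absurd ⟨hm, h4.1⟩ notQ3Q4
      · rfl
      · rfl
    have e4 : (if xR ∈ F then (if y = til D xR + t2 then wPlus p q D xR else 0) else 0)
        = wPlus p q D xR := by rw [if_pos h4.1, if_pos h4.2]
    by_cases h5 : xL ∈ F ∧ y = til D xL + t2 - t1
    · have e5 : (if xL ∈ F then (if y = til D xL + t2 - t1 then wMinus p q D xL else 0) else 0)
          = wMinus p q D xL := by rw [if_pos h5.1, if_pos h5.2]
      have hw1 : wPlus p q D xR = 1/2 := by
        unfold wPlus
        rw [if_pos ⟨by rw [hRL]; exact (hFmem xL h5.1).1,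
          by rw [hRL]; exact (hFmem xL h5.1).2,
          by rw [hRL]; exact h4.2.symm.trans h5.2⟩]
      have hw2 : wMinus p q D xL = 1/2 := by
        unfold wMinus
        rw [if_pos ⟨by rw [hLR]; exact (hFmem xR h4.1).1,
          by rw [hLR]; exact (hFmem xR h4.1).2,
          by rw [hLR]; exact h5.2.symm.trans h4.2⟩]
      rw [e0, e1, e2, e3, e4, e5, hw1, hw2]; norm_num
    · have e5 : (if xL ∈ F then (if y = til D xL + t2 - t1 then wMinus p q D xL else 0) else 0)
          = 0 := by
        split_ifs with hm hc
        · exact absurd ⟨hm, hc⟩ h5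
        · rfl
        · rfl
      rw [e0, e1, e2, e3, e4, e5]
      have := wPlus_le_one p q D xR
      linarith
  · have e4 : (if xR ∈ F then (if y = til D xR + t2 then wPlus p q D xR else 0) else 0) = 0 := by
      split_ifs with hm hc
      · exact absurd ⟨hm, hc⟩ h4
      · rfl
      · rfl
    by_cases h5 : xL ∈ F ∧ y = til D xL + t2 - t1
    · have hy2 := habove5 h5
      have e0 : (if y ∈ F then ca q else 0) = 0 := by
        rw [if_neg (fun h => absurd (hbel0 h) (ne_of_gt hy2))]
      have e1 : (if y - t1 ∈ F then cb q else 0) = 0 := by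
        rw [if_neg (fun h => absurd (hbel1 h) (ne_of_gt hy2))]
      have e2 : (if y + t1 ∈ F then cb q else 0) = 0 := by
        rw [if_neg (fun h => absurd (hbel2 h) (ne_of_gt hy2))]
      have e3 : (if xc ∈ F then (if til D xc ≠ xc ∧ y = til D xc then (1:ℝ) else 0) else 0)
          = 0 := by
        split_ifs with hm hc
        · exact absurd ⟨hm, h5.1⟩ notQ3Q5
        · rfl
        · rfl
      have e5 : (if xL ∈ F then (if y = til D xL + t2 - t1 then wMinus p q D xL else 0) else 0)
          = wMinus p q D xL := by rw [if_pos h5.1, if_pos h5.2]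
      rw [e0, e1, e2, e3, e4, e5]
      have := wMinus_le_one p q D xL
      linarith
    · have e5 : (if xL ∈ F then (if y = til D xL + t2 - t1 then wMinus p q D xL else 0) else 0)
          = 0 := by
        split_ifs with hm hc
        · exact absurd ⟨hm, hc⟩ h5
        · rfl
        · rfl
      by_cases h3 : xc ∈ F ∧ (til D xc ≠ xc ∧ y = til D xc)
      · have hy2 := hQ3ne h3
        have e0 : (if y ∈ F then ca q else 0) = 0 := by
          rw [if_neg (fun h => absurd (hbel0 h) hy2)]
        have e1 : (if y - t1 ∈ F then cb q else 0) = 0 := by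
          rw [if_neg (fun h => absurd (hbel1 h) hy2)]
        have e2 : (if y + t1 ∈ F then cb q else 0) = 0 := by
          rw [if_neg (fun h => absurd (hbel2 h) hy2)]
        have e3 : (if xc ∈ F then (if til D xc ≠ xc ∧ y = til D xc then (1:ℝ) else 0) else 0)
            = 1 := by rw [if_pos h3.1, if_pos h3.2]
        rw [e0, e1, e2, e3, e4, e5]; norm_num
      · have e3 : (if xc ∈ F then (if til D xc ≠ xc ∧ y = til D xc then (1:ℝ) else 0) else 0)
            = 0 := by
          split_ifs with hm hc
          · exact absurd ⟨hm, hc⟩ h3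
          · rfl
          · rfl
        rw [e3, e4, e5]
        by_cases hq1 : q = 1
        · have hca : ca q = 1/2 := by simp [ca, hq1]
          have hcb : cb q = 1/4 := by simp [cb, hq1]
          have b0 : (if y ∈ F then ca q else 0) ≤ 1/2 := by
            split_ifs <;> norm_num [hca]
          have b1 : (if y - t1 ∈ F then cb q else 0) ≤ 1/4 := by
            split_ifs <;> norm_num [hcb]
          have b2 : (if y + t1 ∈ F then cb q else 0) ≤ 1/4 := by
            split_ifs <;> norm_num [hcb]
          linarith
        · have hca : ca q = 1 := by simp [ca, hq1]
          have hcb : cb q = 1/2 := by simp [cb, hq1]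
          by_cases h0 : y ∈ F
          · obtain ⟨k, hk⟩ := bLFS_fst (hFmem y h0).2
            have e1 : (if y - t1 ∈ F then cb q else 0) = 0 := by
              refine if_neg (fun h => ?_)
              obtain ⟨k', hk'⟩ := bLFS_fst (hFmem _ h).2
              have hk'' : y.1 - 1 = (k' : ℝ) * q := by simpa [t1] using hk'
              exact hq1 (q_eq_one q (k := k) (k' := k') (by linarith))
            have e2 : (if y + t1 ∈ F then cb q else 0) = 0 := by
              refine if_neg (fun h => ?_)
              obtain ⟨k', hk'⟩ := bLFS_fst (hFmem _ h).2
              have hk'' : y.1 + 1 = (k' : ℝ) * q := by simpa [t1] using hk'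
              exact hq1 (q_eq_one q (k := k') (k' := k) (by linarith))
            rw [if_pos h0, e1, e2, hca]; norm_num
          · rw [if_neg h0]
            have b1 : (if y - t1 ∈ F then cb q else 0) ≤ 1/2 := by
              split_ifs <;> norm_num [hcb]
            have b2 : (if y + t1 ∈ F then cb q else 0) ≤ 1/2 := by
              split_ifs <;> norm_num [hcb]
            linarith

lemma ereal_sum_ne_bot {α : Type*} {s : Finset α} {f : α → EReal}
    (h : ∀ a ∈ s, f a ≠ ⊥) : ∑ a ∈ s, f a ≠ ⊥ := by
  classical
  induction s using Finset.induction_on with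
  | empty => simp
  | insert _ _ hx ih =>
    rename_i a s'
    rw [Finset.sum_insert hx]
    intro hbot
    rcases EReal.add_eq_bot_iff.mp hbot with h1 | h1
    · exact h a (Finset.mem_insert_self a s') h1
    · exact ih (fun b hb => h b (Finset.mem_insert_of_mem hb)) h1

lemma vF_ne_bot (cF r : ℝ) : vF cF r ≠ ⊥ := by
  unfold vF; split_ifs <;> simp

lemma ereal_coe_sum {α : Type*} (s : Finset α) (f : α → ℝ) :
    ((∑ a ∈ s, f a : ℝ) : EReal) = ∑ a ∈ s, ((f a : ℝ) : EReal) := by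
  classical
  induction s using Finset.induction_on with
  | empty => simp
  | insert _ _ hx ih =>
    rename_i a s'
    rw [Finset.sum_insert hx, Finset.sum_insert hx, EReal.coe_add, ih]

/-- the strip decomposition inequality
`6 c_F n + V_n(D_n) ≥ Σ_{x ∈ D_n ∩ ∂L_{FS}} E_strip(x) + Σ_{x ∈ D_n \ S(∂L_{FS})} E_loc(x)`. -/
theorem strip_decomposition
    (cF cS : ℝ) (hcF : 0 < cF) (hcS : 0 < cS)
    (p q : ℕ) (hp : 0 < p) (hq : 0 < q) (hpq : Nat.Coprime p q)
    (n : ℕ) (D : Finset Pt) (hD : D ∈ Cn p q n) :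
    (((∑ x ∈ D.filter fun x => x ∈ bLFS p q, EStrip cF cS p q D x) +
        ∑ x ∈ D \ SLFS p q D, Eloc cF D x : ℝ) : EReal) ≤
      ((6 * cF * (n : ℝ) : ℝ) : EReal) + Vn cF cS p q D := by
  classical
  obtain ⟨hsub, hcard⟩ := hD
  by_cases hshort : ∃ e ∈ D.offDiag, dE e.1 e.2 < 1
  · obtain ⟨e, he, hlt⟩ := hshort
    have hsumtop : ∑ e ∈ D.offDiag, vF cF (dE e.1 e.2) = ⊤ := by
      rw [← Finset.add_sum_erase _ _ he]
      have h1 : vF cF (dE e.1 e.2) = ⊤ := if_pos hlt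
      rw [h1]
      exact EReal.top_add_of_ne_bot (ereal_sum_ne_bot (fun a _ => vF_ne_bot cF _))
    have : Vn cF cS p q D = ⊤ := by
      unfold Vn; rw [hsumtop]; exact EReal.top_add_of_ne_bot (by simp)
    rw [this]
    rw [show ((6 * cF * (n:ℝ) : ℝ) : EReal) + (⊤ : EReal) = ⊤ from EReal.coe_add_top _]
    exact le_top
  · push_neg at hshort
    -- real-valued energy
    have hvF : ∀ e ∈ D.offDiag, vF cF (dE e.1 e.2)
        = (((if dE e.1 e.2 = 1 then -cF else 0 : ℝ)) : EReal) := by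
      intro e he
      unfold vF
      rw [if_neg (not_lt.mpr (hshort e he))]
      split_ifs <;> simp
    rw [show Vn cF cS p q D = ((((∑ e ∈ D.offDiag, if dE e.1 e.2 = 1 then -cF else 0)
        + ∑ x ∈ D, v1 cS p q x : ℝ)) : EReal) by
      unfold Vn
      rw [Finset.sum_congr rfl hvF, ← ereal_coe_sum, ← EReal.coe_add]]
    rw [← EReal.coe_add, EReal.coe_le_coe_iff]
    -- now a real inequality
    have hdeg : (∑ e ∈ D.offDiag, if dE e.1 e.2 = 1 then -cF else 0)
        = ∑ x ∈ D, (-cF) * ((D.filter fun y => dE x y = 1).card : ℝ) := by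
      rw [show D.offDiag = (D ×ˢ D).filter (fun a => a.1 ≠ a.2) from
        Finset.ext fun a => by simp [Finset.mem_offDiag, and_assoc], Finset.sum_filter, Finset.sum_product]
      refine Finset.sum_congr rfl (fun x hx => ?_)
      have step : ∀ y ∈ D, (if (x,y).1 ≠ (x,y).2 then (if dE (x,y).1 (x,y).2 = 1 then -cF else 0)
          else 0) = if dE x y = 1 then -cF else 0 := by
        intro y _
        by_cases hxy : x = y
        · subst hxy; simp [dE_self]
        · exact if_pos hxy
      rw [Finset.sum_congr rfl step, ← Finset.sum_filter, Finset.sum_const, nsmul_eq_mul]; ring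
    rw [hdeg]
    have hv1 : ∑ x ∈ D, v1 cS p q x = ∑ x ∈ D.filter (fun x => x ∈ bLFS p q), (-cS) := by
      rw [Finset.sum_filter]; rfl
    rw [hv1]
    set F := D.filter (fun x => x ∈ bLFS p q) with hF
    set T := SLFS p q D with hT
    have hTsub : T ⊆ D := Finset.filter_subset _ _
    have h1 : ∑ x ∈ D, Eloc cF D x
        = 6*cF*(n:ℝ) + ∑ x ∈ D, (-cF) * ((D.filter fun y => dE x y = 1).card : ℝ) := by
      rw [show (6*cF*(n:ℝ)) = ∑ _x ∈ D, (6*cF) by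
        rw [Finset.sum_const, nsmul_eq_mul, hcard]; ring]
      rw [← Finset.sum_add_distrib]
      refine Finset.sum_congr rfl fun x hx => ?_
      unfold Eloc; rw [if_pos hx]; ring
    have h2 : ∑ x ∈ D, Eloc cF D x = (∑ x ∈ D \ T, Eloc cF D x) + ∑ y ∈ T, Eloc cF D y :=
      (Finset.sum_sdiff hTsub).symm
    have key : ∑ x ∈ F, (EStrip cF cS p q D x + cS) ≤ ∑ y ∈ T, Eloc cF D y := by
      calc ∑ x ∈ F, (EStrip cF cS p q D x + cS)
          = ∑ x ∈ F, ∑ y ∈ T, coef p q D x y * Eloc cF D y := by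
            refine Finset.sum_congr rfl fun x hx => ?_
            have hm := Finset.mem_filter.mp hx
            exact (stripA cF cS p q D hm.1 hm.2).symm
        _ = ∑ y ∈ T, ∑ x ∈ F, coef p q D x y * Eloc cF D y := Finset.sum_comm
        _ = ∑ y ∈ T, (∑ x ∈ F, coef p q D x y) * Eloc cF D y := by
            refine Finset.sum_congr rfl fun y _ => (Finset.sum_mul _ _ _).symm
        _ ≤ ∑ y ∈ T, 1 * Eloc cF D y := by
            refine Finset.sum_le_sum fun y _ => ?_
            exact mul_le_mul_of_nonneg_right (stripB y) (Eloc_nonneg hcF.le hsub y)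
        _ = ∑ y ∈ T, Eloc cF D y := by simp
    have expand : ∑ x ∈ F, (EStrip cF cS p q D x + cS)
        = (∑ x ∈ F, EStrip cF cS p q D x) + ∑ _x ∈ F, cS := Finset.sum_add_distrib
    have hconst : ∑ _x ∈ F, (-cS) = -∑ _x ∈ F, cS := by
      rw [Finset.sum_const, Finset.sum_const]; simp
    linarith [key, expand, hconst, h1, h2]
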